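/- Let (x, s, λ) ∈ ℝⁿ × ℝᵐ × ℝᵐ with s > 0 componentwise, and let (Δx, Δs, Δλ) solve the primal barrier Newton system: Aᵀ(λ + Δλ) = W(x + Δx) + c, s + Δs = A(x + Δx) + b, and μ(s⁻¹ − s⁻²∘Δs) = λ + Δλ. Let v ∈ ℝᵐ and μ > 0 satisfy s = √μ·e^{−v}. Then s + Δs = s∘(𝟏 − d(v,μ)), where d(v,μ) is the log-domain Newton direction. -/

import Mathlib

open Matrix

/-- Elementwise exponentiation `e^v` of a vector. -/
noncomputable def expV {m : ℕ} (v : Fin m → ℝ) : Fin m → ℝ := fun i => Real.exp (v i)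

/-- The log-domain Newton system: `(d, x)` satisfies
`√μ·Aᵀ(eᵛ + eᵛ∘d) = Wx + c` and `√μ·(e^{−v} − e^{−v}∘d) = Ax + b`. -/
noncomputable def IsNewton {m n : ℕ} (A : Matrix (Fin m) (Fin n) ℝ) (b : Fin m → ℝ)
    (c : Fin n → ℝ) (W : Matrix (Fin n) (Fin n) ℝ) (μ : ℝ) (v d : Fin m → ℝ)
    (x : Fin n → ℝ) : Prop :=
  Real.sqrt μ • (Aᵀ).mulVec (expV v + expV v * d) = W.mulVec x + c ∧
  Real.sqrt μ • (expV (-v) - expV (-v) * d) = A.mulVec x + b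

/-- `v` is a centered point for parameter `μ`, witnessed by `x`:
`√μ·Aᵀeᵛ = Wx + c` and `√μ·e^{−v} = Ax + b`. -/
noncomputable def IsCentered {m n : ℕ} (A : Matrix (Fin m) (Fin n) ℝ) (b : Fin m → ℝ)
    (c : Fin n → ℝ) (W : Matrix (Fin n) (Fin n) ℝ) (μ : ℝ) (v : Fin m → ℝ)
    (x : Fin n → ℝ) : Prop :=
  Real.sqrt μ • (Aᵀ).mulVec (expV v) = W.mulVec x + c ∧
  Real.sqrt μ • expV (-v) = A.mulVec x + b

/-- The divergence `h(u,v) := ⟨eᵘ, e^{−v}⟩ + ⟨e^{−u}, eᵛ⟩ − 2m`. -/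
noncomputable def diverg {m : ℕ} (u v : Fin m → ℝ) : ℝ :=
  (∑ i, Real.exp (u i) * Real.exp (-v i)) + (∑ i, Real.exp (-u i) * Real.exp (v i))
    - 2 * m

/-- The Euclidean norm of a vector in `ℝᵐ`. -/
noncomputable def enorm {m : ℕ} (d : Fin m → ℝ) : ℝ := Real.sqrt (∑ i, d i ^ 2)

/-- let `(x, s, λ)` with `s > 0` and let `(Δx, Δs, Δλ)` solve the primal
barrier Newton system `Aᵀ(λ+Δλ) = W(x+Δx) + c`, `s + Δs = A(x+Δx) + b`,
`μ(s⁻¹ − s⁻²∘Δs) = λ + Δλ`. If `s = √μ·e^{−v}` with `μ > 0`, then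
`s + Δs = s∘(𝟏 − d(v,μ))`, where `d(v,μ)` is the log-domain Newton direction. -/

lemma newton_d_unique {m n : ℕ} (A : Matrix (Fin m) (Fin n) ℝ) (b : Fin m → ℝ)
    (c : Fin n → ℝ) (W : Matrix (Fin n) (Fin n) ℝ) (hW : W.PosSemidef) (μ : ℝ)
    (hμ : 0 < μ) (v d₁ d₂ : Fin m → ℝ) (x₁ x₂ : Fin n → ℝ)
    (H1 : IsNewton A b c W μ v d₁ x₁) (H2 : IsNewton A b c W μ v d₂ x₂) : d₁ = d₂ := by
  have hsμ : (0:ℝ) < Real.sqrt μ := Real.sqrt_pos.2 hμ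
  set y : Fin n → ℝ := x₁ - x₂ with hy
  set δ : Fin m → ℝ := d₁ - d₂ with hδ
  have harg : (expV v + expV v * d₁) - (expV v + expV v * d₂) = expV v * δ := by
    funext i; simp [hδ, expV, mul_sub]
  have e1 : Real.sqrt μ • (Aᵀ).mulVec (expV v * δ) = W.mulVec y := by
    rw [← harg, Matrix.mulVec_sub, smul_sub, H1.1, H2.1, hy, Matrix.mulVec_sub]
    abel
  have harg2 : (expV (-v) - expV (-v) * d₁) - (expV (-v) - expV (-v) * d₂)
      = -(expV (-v) * δ) := by
    funext i; simp [hδ, expV, mul_sub]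
  have e2 : A.mulVec y = -(Real.sqrt μ • (expV (-v) * δ)) := by
    have : Real.sqrt μ • ((expV (-v) - expV (-v) * d₁) - (expV (-v) - expV (-v) * d₂))
        = A.mulVec x₁ + b - (A.mulVec x₂ + b) := by
      rw [smul_sub, H1.2, H2.2]
    rw [harg2] at this
    rw [smul_neg] at this
    rw [hy, Matrix.mulVec_sub, this]; abel
  have hdot : y ⬝ᵥ W.mulVec y = -(μ * ∑ i, δ i ^ 2) := by
    rw [← e1, dotProduct_smul, Matrix.dotProduct_mulVec, Matrix.vecMul_transpose,
      e2]
    simp only [neg_dotProduct, smul_dotProduct, smul_eq_mul]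
    rw [mul_neg, ← mul_assoc, Real.mul_self_sqrt hμ.le]
    congr 1
    congr 1
    simp only [dotProduct, Pi.mul_apply, expV]
    apply Finset.sum_congr rfl
    intro i _
    simp only [Pi.neg_apply, Real.exp_neg]
    field_simp
  have h0 : 0 ≤ y ⬝ᵥ W.mulVec y := by have := hW.dotProduct_mulVec_nonneg y; simpa using this
  have hsum : (∑ i, δ i ^ 2) = 0 := by
    have hle : μ * ∑ i, δ i ^ 2 ≤ 0 := by
      rw [hdot] at h0; linarith
    have hge : 0 ≤ ∑ i, δ i ^ 2 := Finset.sum_nonneg fun i _ => sq_nonneg _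
    nlinarith
  have hz : ∀ i, δ i = 0 := by
    intro i
    have := (Finset.sum_eq_zero_iff_of_nonneg (fun i _ => sq_nonneg (δ i))).1 hsum i
      (Finset.mem_univ i)
    exact pow_eq_zero_iff (by norm_num) |>.1 this
  funext i
  have := hz i
  simpa [hδ, sub_eq_zero] using congrFun (funext hz : δ = 0) i

theorem stmt_18 {m n : ℕ} (A : Matrix (Fin m) (Fin n) ℝ) (b : Fin m → ℝ) (c : Fin n → ℝ)
    (W : Matrix (Fin n) (Fin n) ℝ) (hW : W.PosSemidef) (hAW : (Aᵀ * A + W).PosDef)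
    (x : Fin n → ℝ) (s lam : Fin m → ℝ) (hs : ∀ i, 0 < s i)
    (Δx : Fin n → ℝ) (Δs Δlam : Fin m → ℝ) (μ : ℝ) (hμ : 0 < μ)
    (h1 : (Aᵀ).mulVec (lam + Δlam) = W.mulVec (x + Δx) + c)
    (h2 : s + Δs = A.mulVec (x + Δx) + b)
    (h3 : μ • (s⁻¹ - s⁻¹ * s⁻¹ * Δs) = lam + Δlam)
    (v : Fin m → ℝ) (hv : s = Real.sqrt μ • expV (-v)) :
    ∀ d : Fin m → ℝ, ∀ x' : Fin n → ℝ, IsNewton A b c W μ v d x' →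
      s + Δs = s * (1 - d) := by
  intro d x' hN
  have hsμ : (0:ℝ) < Real.sqrt μ := Real.sqrt_pos.2 hμ
  have hsμμ : Real.sqrt μ * Real.sqrt μ = μ := Real.mul_self_sqrt hμ.le
  have hsi : ∀ i, s i = Real.sqrt μ * Real.exp (-v i) := by
    intro i; have := congrFun hv i; simpa [expV] using this
  set d₀ : Fin m → ℝ := fun i => -Δs i / s i with hd₀
  have hN₀ : IsNewton A b c W μ v d₀ (x + Δx) := by
    constructor
    · rw [← h1, ← h3]
      rw [← Matrix.mulVec_smul]
      suffices h : Real.sqrt μ • (expV v + expV v * d₀) = μ • (s⁻¹ - s⁻¹ * s⁻¹ * Δs) by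
        rw [h]
      funext i
      have hsine : s i ≠ 0 := (hs i).ne'
      have hE : Real.exp (v i) = Real.sqrt μ / s i := by
        rw [hsi i, Real.exp_neg]
        field_simp
      simp only [Pi.smul_apply, Pi.add_apply, Pi.mul_apply, Pi.sub_apply, Pi.inv_apply,
        expV, smul_eq_mul, hd₀]
      rw [hE]
      field_simp
      ring_nf
      rw [Real.sq_sqrt hμ.le]
      ring
    · rw [← h2]
      funext i
      have hsine : s i ≠ 0 := (hs i).ne'
      have hE : Real.sqrt μ * Real.exp (-v i) = s i := (hsi i).symm
      simp only [Pi.smul_apply, Pi.sub_apply, Pi.mul_apply, Pi.add_apply, expV,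
        smul_eq_mul, hd₀, Pi.neg_apply]
      rw [mul_sub, ← mul_assoc, hE]
      field_simp
      ring
  have hdd : d = d₀ := newton_d_unique A b c W hW μ hμ v d d₀ x' (x + Δx) hN hN₀
  rw [hdd]
  funext i
  have hsine : s i ≠ 0 := (hs i).ne'
  simp only [Pi.add_apply, Pi.mul_apply, Pi.sub_apply, Pi.one_apply, hd₀]
  field_simp
  ring
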